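/- Suppose 2^n = ∑_{i=1}^m d_i · 10^{e_i} with 1 ≤ d_i ≤ 9 and 0 ≤ e_1 < e_2 < ... < e_m, where n is a positive integer. Then e_k < 4^{k-1} for all 1 ≤ k ≤ m. -/

import Mathlib

theorem stmt9 (n m : ℕ) (d e : ℕ → ℕ) (hn : 0 < n)
    (hd : ∀ i, 1 ≤ i → i ≤ m → 1 ≤ d i ∧ d i ≤ 9)
    (he : ∀ i j, 1 ≤ i → i < j → j ≤ m → e i < e j)
    (heq : 2 ^ n = ∑ i ∈ Finset.Icc 1 m, d i * 10 ^ (e i)) :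
    ∀ k, 1 ≤ k → k ≤ m → e k < 4 ^ (k - 1) := by
  have hmono : ∀ i j, 1 ≤ i → i ≤ j → j ≤ m → e i ≤ e j := by
    intro i j h1 h2 h3
    rcases eq_or_lt_of_le h2 with rfl | h
    · exact le_refl _
    · exact (he i j h1 h h3).le
  -- every index bounded by n
  have hA : ∀ k, 1 ≤ k → k ≤ m → e k ≤ n := by
    intro k h1 h2
    have hmem : k ∈ Finset.Icc 1 m := Finset.mem_Icc.mpr ⟨h1, h2⟩
    have hle : d k * 10 ^ (e k) ≤ 2 ^ n := by
      rw [heq]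
      exact Finset.single_le_sum (f := fun i => d i * 10 ^ (e i)) (fun i _ => Nat.zero_le _) hmem
    have h10 : 10 ^ (e k) ≤ d k * 10 ^ (e k) :=
      Nat.le_mul_of_pos_left _ (hd k h1 h2).1
    have h2le : 2 ^ (e k) ≤ 2 ^ n := by
      calc 2 ^ (e k) ≤ 10 ^ (e k) := Nat.pow_le_pow_left (by norm_num) _
        _ ≤ 2 ^ n := le_trans h10 hle
    exact (Nat.pow_le_pow_iff_right (by norm_num)).mp h2le
  -- partial sums bound
  have hB : ∀ j, 1 ≤ j → j ≤ m →
      (∑ i ∈ Finset.Icc 1 j, d i * 10 ^ (e i)) < 10 ^ (e j + 1) := by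
    intro j hj
    induction j, hj using Nat.le_induction with
    | base =>
      intro h1m
      rw [Finset.Icc_self, Finset.sum_singleton]
      have h1 : d 1 * 10 ^ e 1 ≤ 9 * 10 ^ e 1 :=
        Nat.mul_le_mul_right _ (hd 1 le_rfl h1m).2
      have h2 : 0 < 10 ^ e 1 := Nat.pow_pos (by norm_num)
      rw [pow_succ]
      omega
    | succ j hj ih =>
      intro hjm
      have hjm' : j ≤ m := le_trans (Nat.le_succ j) hjm
      rw [Finset.sum_Icc_succ_top (by omega : 1 ≤ j + 1)]
      have ihv := ih hjm'
      have hee : e j < e (j+1) := he j (j+1) hj (Nat.lt_succ_self j) hjm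
      have h1 : 10 ^ (e j + 1) ≤ 10 ^ (e (j+1)) := Nat.pow_le_pow_right (by norm_num) hee
      have h2 : d (j+1) * 10 ^ e (j+1) ≤ 9 * 10 ^ e (j+1) :=
        Nat.mul_le_mul_right _ (hd (j+1) (by omega) hjm).2
      have h3 : 0 < 10 ^ e (j+1) := Nat.pow_pos (by norm_num)
      rw [pow_succ]
      omega
  intro k hk
  induction k, hk using Nat.le_induction with
  | base =>
    intro h1m
    -- show e 1 < 1, i.e. e 1 = 0
    by_contra hcon
    push_neg at hcon
    have he1 : 1 ≤ e 1 := by simpa using hcon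
    have hdvd : (10 : ℕ) ∣ 2 ^ n := by
      rw [heq]
      refine Finset.dvd_sum ?_
      intro i hi
      rw [Finset.mem_Icc] at hi
      have : 1 ≤ e i := le_trans he1 (hmono 1 i le_rfl hi.1 hi.2)
      exact Dvd.dvd.mul_left (dvd_pow_self 10 (by omega : e i ≠ 0)) _
    have h5 : (5 : ℕ) ∣ 2 ^ n := dvd_trans (by norm_num) hdvd
    have := Nat.Prime.dvd_of_dvd_pow (p := 5) (by norm_num) h5
    norm_num at this
  | succ k hk ih =>
    intro hkm
    have hkm' : k ≤ m := le_trans (Nat.le_succ k) hkm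
    have hIH : e k < 4 ^ (k - 1) := ih hkm'
    -- split sum
    have hsplit : (∑ i ∈ Finset.Icc 1 k, d i * 10 ^ (e i))
        + (∑ i ∈ Finset.Icc (k+1) m, d i * 10 ^ (e i)) = 2 ^ n := by
      rw [heq]
      rw [show Finset.Icc 1 m = Finset.Ioc 0 m by rw [← Finset.Icc_add_one_left_eq_Ioc]; rfl,
          show Finset.Icc 1 k = Finset.Ioc 0 k by rw [← Finset.Icc_add_one_left_eq_Ioc]; rfl,
          show Finset.Icc (k+1) m = Finset.Ioc k m by rw [← Finset.Icc_add_one_left_eq_Ioc]]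
      exact Finset.sum_Ioc_consecutive _ (Nat.zero_le k) hkm'
    set S := ∑ i ∈ Finset.Icc 1 k, d i * 10 ^ (e i) with hS
    have hSpos : 0 < S := by
      have hmem : 1 ∈ Finset.Icc 1 k := Finset.mem_Icc.mpr ⟨le_rfl, hk⟩
      have : d 1 * 10 ^ e 1 ≤ S := Finset.single_le_sum (f := fun i => d i * 10 ^ (e i)) (fun i _ => Nat.zero_le _) hmem
      have hd1 : 1 ≤ d 1 := (hd 1 le_rfl (le_trans hk hkm')).1
      have h10 : 0 < 10 ^ e 1 := Nat.pow_pos (by norm_num)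
      nlinarith
    have hdvdT : 2 ^ (e (k+1)) ∣ ∑ i ∈ Finset.Icc (k+1) m, d i * 10 ^ (e i) := by
      refine Finset.dvd_sum ?_
      intro i hi
      rw [Finset.mem_Icc] at hi
      have hei : e (k+1) ≤ e i := hmono (k+1) i (by omega) hi.1 hi.2
      have : (2:ℕ) ^ (e (k+1)) ∣ 10 ^ (e i) := by
        calc (2:ℕ) ^ (e (k+1)) ∣ 2 ^ (e i) := pow_dvd_pow 2 hei
          _ ∣ 10 ^ (e i) := pow_dvd_pow_of_dvd (by norm_num) _
      exact this.mul_left _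
    have hdvdN : 2 ^ (e (k+1)) ∣ 2 ^ n := pow_dvd_pow 2 (hA (k+1) (by omega) hkm)
    have hdvdS : 2 ^ (e (k+1)) ∣ S := by
      have : S = 2 ^ n - ∑ i ∈ Finset.Icc (k+1) m, d i * 10 ^ (e i) := by omega
      rw [this]
      exact Nat.dvd_sub hdvdN hdvdT
    have hleS : 2 ^ (e (k+1)) ≤ S := Nat.le_of_dvd hSpos hdvdS
    have hSlt : S < 10 ^ (e k + 1) := hB k hk hkm'
    have hchain : (2:ℕ) ^ (e (k+1)) < 2 ^ (4 * (e k + 1)) := by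
      calc (2:ℕ) ^ (e (k+1)) ≤ S := hleS
        _ < 10 ^ (e k + 1) := hSlt
        _ ≤ 16 ^ (e k + 1) := Nat.pow_le_pow_left (by norm_num) _
        _ = 2 ^ (4 * (e k + 1)) := by rw [pow_mul]; norm_num
    have hlt : e (k+1) < 4 * (e k + 1) :=
      (Nat.pow_lt_pow_iff_right (by norm_num)).mp hchain
    have h4 : 4 * (e k + 1) ≤ 4 ^ k := by
      have : e k + 1 ≤ 4 ^ (k - 1) := hIH
      calc 4 * (e k + 1) ≤ 4 * 4 ^ (k - 1) := by omega
        _ = 4 ^ (k - 1 + 1) := by rw [pow_succ]; ring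
        _ = 4 ^ k := by congr 1; omega
    have : e (k+1) < 4 ^ k := lt_of_lt_of_le hlt h4
    simpa using this
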